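/- Let G₁ and G₂ be connected finite simple graphs on vertex sets {1,…,k₁} and {1,…,k₂} with Laplacian matrices L₁ and L₂, let s ∈ {1,…,k₂}, and suppose there is a nonempty set P ⊆ {1,…,k₁} such that every eigenvector of L₁ has nonzero entries at all positions in P, and every eigenvector of L₂ has a nonzero s-th entry. Then every eigenvalue λ of the composite matrix L = I_{k₁} ⊗ L₂ + L₁ ⊗ (e_s e_sᵀ) is simple, i.e., the kernel of L − λI is one-dimensional. -/

import Mathlib

/-- The composite matrix `L = I_{k₁} ⊗ L₂ + L₁ ⊗ (e_s e_sᵀ)`, indexed by pairs. -/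
def composite {k₁ k₂ : ℕ} (L₁ : Matrix (Fin k₁) (Fin k₁) ℝ) (L₂ : Matrix (Fin k₂) (Fin k₂) ℝ)
    (s : Fin k₂) : Matrix (Fin k₁ × Fin k₂) (Fin k₁ × Fin k₂) ℝ :=
  Matrix.of fun p q =>
    (if p.1 = q.1 then L₂ p.2 q.2 else 0) +
    L₁ p.1 q.1 * ((if p.2 = s then (1 : ℝ) else 0) * (if q.2 = s then (1 : ℝ) else 0))

open Matrix

lemma key {k₁ k₂ : ℕ} (A : Matrix (Fin k₁) (Fin k₁) ℝ) (B : Matrix (Fin k₂) (Fin k₂) ℝ)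
    (s : Fin k₂) (lam : ℝ) (w : Fin k₁ × Fin k₂ → ℝ)
    (hw : (composite A B s).mulVec w = lam • w) (i : Fin k₁) (a : Fin k₂) :
    B.mulVec (fun b => w (i, b)) a + (if a = s then A.mulVec (fun j => w (j, s)) i else 0)
      = lam * w (i, a) := by
  have h := congrFun hw (i, a)
  simp only [Matrix.mulVec, dotProduct, composite, Matrix.of_apply, Pi.smul_apply,
    smul_eq_mul, Fintype.sum_prod_type] at h ⊢
  rw [← h]
  simp [add_mul, Finset.sum_add_distrib, mul_ite, ite_mul, mul_assoc, mul_comm, mul_left_comm,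
    Finset.sum_ite_eq, Finset.sum_ite_eq']

lemma key' {k₁ k₂ : ℕ} (A : Matrix (Fin k₁) (Fin k₁) ℝ) (B : Matrix (Fin k₂) (Fin k₂) ℝ)
    (s : Fin k₂) (lam : ℝ) (w : Fin k₁ × Fin k₂ → ℝ)
    (hw : (composite A B s).mulVec w = lam • w) (i : Fin k₁) (a : Fin k₂) :
    B.mulVec (fun b => w (i, b)) a
      = lam * w (i, a) - (if a = s then A.mulVec (fun j => w (j, s)) i else 0) := by
  have := key A B s lam w hw i a
  linarith

-- Claim A
lemma claimA {k₁ k₂ : ℕ} (A : Matrix (Fin k₁) (Fin k₁) ℝ) (B : Matrix (Fin k₂) (Fin k₂) ℝ)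
    (s : Fin k₂) (lam : ℝ)
    (h₂ : ∀ v : Fin k₂ → ℝ, v ≠ 0 → (∃ μ : ℝ, B.mulVec v = μ • v) → v s ≠ 0)
    (w : Fin k₁ × Fin k₂ → ℝ) (hw : (composite A B s).mulVec w = lam • w) (hw0 : w ≠ 0) :
    (fun i => w (i, s)) ≠ (0 : Fin k₁ → ℝ) := by
  intro hu
  have hAu : A.mulVec (fun j => w (j, s)) = 0 := by rw [hu]; simp
  have hx : ∃ i, (fun b => w (i, b)) ≠ (0 : Fin k₂ → ℝ) := by
    by_contra hc
    push_neg at hc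
    exact hw0 (funext fun p => by simpa using congrFun (hc p.1) p.2)
  obtain ⟨i, hi⟩ := hx
  have heig : B.mulVec (fun b => w (i, b)) = lam • (fun b => w (i, b)) := by
    funext a
    have := key A B s lam w hw i a
    rw [hAu] at this
    simpa using this
  exact h₂ _ hi ⟨lam, heig⟩ (by simpa using congrFun hu i)

-- Claim B
lemma claimB {k₁ k₂ : ℕ} (A : Matrix (Fin k₁) (Fin k₁) ℝ) (B : Matrix (Fin k₂) (Fin k₂) ℝ)
    (hB : B.IsSymm) (s : Fin k₂) (lam : ℝ)
    (h₂ : ∀ v : Fin k₂ → ℝ, v ≠ 0 → (∃ μ : ℝ, B.mulVec v = μ • v) → v s ≠ 0)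
    (w : Fin k₁ × Fin k₂ → ℝ) (hw : (composite A B s).mulVec w = lam • w) (hw0 : w ≠ 0) :
    ∃ μ : ℝ, A.mulVec (fun j => w (j, s)) = μ • (fun j => w (j, s)) := by
  set u : Fin k₁ → ℝ := fun j => w (j, s) with hu
  set c : Fin k₁ → ℝ := A.mulVec u with hc
  have hu0 : u ≠ 0 := claimA A B s lam h₂ w hw hw0
  have hk : ∀ i a, B.mulVec (fun b => w (i, b)) a
      = lam * w (i, a) - (if a = s then c i else 0) := fun i a => key' A B s lam w hw i a
  by_cases hE : ∃ y : Fin k₂ → ℝ, y ≠ 0 ∧ B.mulVec y = lam • y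
  · obtain ⟨y, hy0, hy⟩ := hE
    have hys : y s ≠ 0 := h₂ y hy0 ⟨lam, hy⟩
    refine ⟨0, ?_⟩
    have hc0 : ∀ i, c i = 0 := by
      intro i
      have h1 : y ⬝ᵥ B.mulVec (fun b => w (i, b)) = lam * (y ⬝ᵥ fun b => w (i, b)) := by
        rw [Matrix.dotProduct_mulVec, ← Matrix.mulVec_transpose, hB.eq, hy]
        simp [dotProduct, Finset.mul_sum, mul_comm, mul_assoc, mul_left_comm]
      have h2 : y ⬝ᵥ B.mulVec (fun b => w (i, b))
          = lam * (y ⬝ᵥ fun b => w (i, b)) - y s * c i := by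
        simp only [dotProduct]
        rw [Finset.sum_congr rfl fun a _ => by rw [hk i a]]
        simp [mul_sub, Finset.sum_sub_distrib, mul_ite, Finset.mul_sum, mul_comm, mul_assoc,
          mul_left_comm]
      have : y s * c i = 0 := by linarith [h1, h2]
      exact (mul_eq_zero.mp this).resolve_left hys
    funext i
    simp [hc0 i]
  · push_neg at hE
    have inj : ∀ v : Fin k₂ → ℝ, B.mulVec v = lam • v → v = 0 := by
      intro v hv
      by_contra hv0
      exact hE v hv0 hv
    have h3 : ∀ i j : Fin k₁, c j • (fun b => w (i, b)) = c i • (fun b => w (j, b)) := by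
      intro i j
      have := inj (c j • (fun b => w (i, b)) - c i • (fun b => w (j, b))) ?_
      · exact sub_eq_zero.mp this
      · funext a
        simp only [Matrix.mulVec_sub, Matrix.mulVec_smul, Pi.sub_apply, Pi.smul_apply,
          smul_eq_mul]
        rw [hk i a, hk j a]
        split_ifs <;> ring
    have hcne : c ≠ 0 := by
      intro hc0
      apply hw0
      funext p
      have := congrFun (inj (fun b => w (p.1, b)) ?_) p.2
      · simpa using this
      · funext a
        rw [hk p.1 a]
        simp [hc0]
    obtain ⟨j, hcj⟩ : ∃ j, c j ≠ 0 := by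
      by_contra hcn
      push_neg at hcn
      exact hcne (funext hcn)
    set t : ℝ := u j / c j with ht
    have hut : ∀ i, u i = t * c i := by
      intro i
      have h4 := congrFun (h3 i j) s
      simp only [Pi.smul_apply, smul_eq_mul] at h4
      have h5 : c j * u i = c i * u j := h4
      rw [ht, div_mul_eq_mul_div, eq_div_iff hcj]
      linear_combination h5
    have ht0 : t ≠ 0 := by
      intro ht0
      apply hu0
      funext i
      simp [hut i, ht0]
    refine ⟨t⁻¹, ?_⟩
    funext i
    simp only [Pi.smul_apply, smul_eq_mul]
    rw [hut i]
    field_simp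

theorem stmt_3 (k₁ k₂ : ℕ)
    (G₁ : SimpleGraph (Fin k₁)) [DecidableRel G₁.Adj] (hG₁ : G₁.Connected)
    (G₂ : SimpleGraph (Fin k₂)) [DecidableRel G₂.Adj] (hG₂ : G₂.Connected)
    (s : Fin k₂) (P : Set (Fin k₁)) (hP : P.Nonempty)
    (h₁ : ∀ v : Fin k₁ → ℝ, v ≠ 0 → (∃ μ : ℝ, (G₁.lapMatrix ℝ).mulVec v = μ • v) →
      ∀ i ∈ P, v i ≠ 0)
    (h₂ : ∀ v : Fin k₂ → ℝ, v ≠ 0 → (∃ μ : ℝ, (G₂.lapMatrix ℝ).mulVec v = μ • v) → v s ≠ 0)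
    (lam : ℝ)
    (hlam : ∃ w : Fin k₁ × Fin k₂ → ℝ, w ≠ 0 ∧
      (composite (G₁.lapMatrix ℝ) (G₂.lapMatrix ℝ) s).mulVec w = lam • w) :
    Module.finrank ℝ
      (LinearMap.ker ((composite (G₁.lapMatrix ℝ) (G₂.lapMatrix ℝ) s
        - lam • (1 : Matrix (Fin k₁ × Fin k₂) (Fin k₁ × Fin k₂) ℝ)).mulVecLin)) = 1 := by
  obtain ⟨w₀, hw₀0, hw₀⟩ := hlam
  obtain ⟨i₀, hi₀⟩ := hP
  set A := G₁.lapMatrix ℝ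
  set B := G₂.lapMatrix ℝ
  have hB : B.IsSymm := G₂.isSymm_lapMatrix (R := ℝ)
  have hmem : ∀ w : Fin k₁ × Fin k₂ → ℝ,
      w ∈ LinearMap.ker ((composite A B s) - lam •
        (1 : Matrix (Fin k₁ × Fin k₂) (Fin k₁ × Fin k₂) ℝ)).mulVecLin ↔
      (composite A B s).mulVec w = lam • w := by
    intro w
    simp [Matrix.mulVecLin_apply, Matrix.sub_mulVec, Matrix.smul_mulVec,
      Matrix.one_mulVec, sub_eq_zero]
  -- the eigen-slice of any nonzero kernel element is nonzero at i₀
  have hP0 : ∀ w : Fin k₁ × Fin k₂ → ℝ, (composite A B s).mulVec w = lam • w → w ≠ 0 →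
      w (i₀, s) ≠ 0 := by
    intro w hw hw0
    have hu0 := claimA A B s lam h₂ w hw hw0
    have heig := claimB A B hB s lam h₂ w hw hw0
    exact h₁ _ hu0 heig i₀ hi₀
  have hspan : LinearMap.ker ((composite A B s) - lam •
      (1 : Matrix (Fin k₁ × Fin k₂) (Fin k₁ × Fin k₂) ℝ)).mulVecLin = ℝ ∙ w₀ := by
    apply le_antisymm
    · intro w' hw'mem
      rw [hmem] at hw'mem
      by_cases hw'0 : w' = 0
      · simp [hw'0]
      · have h0 : w₀ (i₀, s) ≠ 0 := hP0 w₀ hw₀ hw₀0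
        set w'' : Fin k₁ × Fin k₂ → ℝ := w' (i₀, s) • w₀ - w₀ (i₀, s) • w' with hw''
        have hw''eig : (composite A B s).mulVec w'' = lam • w'' := by
          rw [hw'']
          simp only [Matrix.mulVec_sub, Matrix.mulVec_smul, hw₀, hw'mem]
          funext p
          simp
          ring
        have hw''0 : w'' = 0 := by
          by_contra hne
          have := hP0 w'' hw''eig hne
          apply this
          simp [hw'']
          ring
        have : w' = (w' (i₀, s) / w₀ (i₀, s)) • w₀ := by
          have h5 : w' (i₀, s) • w₀ = w₀ (i₀, s) • w' := by
            have := sub_eq_zero.mp hw''0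
            exact this
          funext p
          have := congrFun h5 p
          simp only [Pi.smul_apply, smul_eq_mul] at this ⊢
          field_simp
          linarith [this]
        rw [this]
        exact Submodule.smul_mem _ _ (Submodule.mem_span_singleton_self w₀)
    · rw [Submodule.span_singleton_le_iff_mem, hmem]
      exact hw₀
  rw [hspan]
  exact finrank_span_singleton hw₀0
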